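/- arXiv:1003.1596 — 4 statements merged into one kernel-verified Lean document; each statement's English description precedes it below -/
import Mathlib

section
/- Let I = [a,b] and J be intervals with |I| ≤ |J| and dist(I,J) ≥ |J|, let μ, ν be positive measures, and let f_I ∈ L²(μ) be supported on I with ∫ f_I dμ = 0, g_J ∈ L²(ν) supported on J. Then |∬ f_I(t)·g_J(s)/(t-s) dμ(t) dν(s)| ≤ A·(|I|/(dist(I,J)+|I|+|J|)²)·μ(I)^{1/2}·ν(J)^{1/2}·‖f_I‖_{L²(μ)}·‖g_J‖_{L²(ν)} for an absolute constant A. -/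
open MeasureTheory Set

/-- Distance between two sets of reals. -/
noncomputable def setDist (s t : Set ℝ) : ℝ := sInf (Set.image2 dist s t)

lemma cs_aux (μ : Measure ℝ) [IsFiniteMeasure μ] (f : ℝ → ℝ) (hf : MemLp f 2 μ) :
    ∫ t, |f t| ∂μ ≤ Real.sqrt (μ Set.univ).toReal * Real.sqrt (∫ t, f t ^ 2 ∂μ) := by
  have hpq : Real.HolderConjugate 2 2 := by constructor <;> norm_num
  have h2 : ENNReal.ofReal (2:ℝ) = 2 := by norm_num
  have hfn : MemLp (fun t => |f t|) (ENNReal.ofReal 2) μ := by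
    rw [h2]; simpa using hf.norm
  have hone : MemLp (fun _ : ℝ => (1:ℝ)) (ENNReal.ofReal 2) μ := memLp_const 1
  have key := integral_mul_le_Lp_mul_Lq_of_nonneg hpq
    (ae_of_all _ fun t => abs_nonneg (f t)) (ae_of_all _ fun _ => zero_le_one) hfn hone
  have hrp : ∀ x : ℝ, x ^ (2:ℝ) = x ^ 2 := fun x => by
    rw [show (2:ℝ) = ((2:ℕ):ℝ) by norm_num, Real.rpow_natCast]
  simp only [mul_one, hrp, sq_abs, one_pow] at key
  calc ∫ t, |f t| ∂μ ≤ (∫ t, f t ^ 2 ∂μ) ^ (1/(2:ℝ)) * (∫ _ : ℝ, (1:ℝ) ∂μ) ^ (1/(2:ℝ)) := key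
    _ = Real.sqrt (μ Set.univ).toReal * Real.sqrt (∫ t, f t ^ 2 ∂μ) := by
        rw [integral_const, smul_eq_mul, mul_one, ← Real.sqrt_eq_rpow, ← Real.sqrt_eq_rpow,
          mul_comm, measureReal_def]


/-- Long range interaction estimate: if I = [a,b], J = [c,d] with |I| ≤ |J| and
dist(I,J) ≥ |J|, f is supported on I with μ-mean zero, g is supported on J, then
|∬ f(t)g(s)/(t-s) dμ(t)dν(s)| ≤ A · |I|/(dist(I,J)+|I|+|J|)² · μ(I)^{1/2} ν(J)^{1/2}
· ‖f‖_{L²(μ)} ‖g‖_{L²(ν)} for an absolute constant A. -/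
theorem long_range_interaction :
    ∃ A : ℝ, 0 < A ∧
    ∀ (μ ν : Measure ℝ) (a b c d : ℝ) (f g : ℝ → ℝ),
      a < b → c < d →
      b - a ≤ d - c →
      d - c ≤ setDist (Set.Icc a b) (Set.Icc c d) →
      Disjoint (Set.Icc a b) (Set.Icc c d) →
      μ (Set.Icc a b) < ⊤ → ν (Set.Icc c d) < ⊤ →
      (∀ t ∉ Set.Icc a b, f t = 0) → (∀ s ∉ Set.Icc c d, g s = 0) →
      MemLp f 2 μ → MemLp g 2 ν →
      (∫ t in Set.Icc a b, f t ∂μ) = 0 →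
      |∫ t in Set.Icc a b, (∫ s in Set.Icc c d, f t * g s / (t - s) ∂ν) ∂μ| ≤
        A * ((b - a) / (setDist (Set.Icc a b) (Set.Icc c d) + (b - a) + (d - c)) ^ 2) *
          Real.sqrt (μ (Set.Icc a b)).toReal * Real.sqrt (ν (Set.Icc c d)).toReal *
          Real.sqrt (∫ t in Set.Icc a b, (f t) ^ 2 ∂μ) *
          Real.sqrt (∫ s in Set.Icc c d, (g s) ^ 2 ∂ν) := by
  refine ⟨9, by norm_num, ?_⟩
  intro μ ν a b c d f g hab hcd hIJ hdistJ hdisj hμI hνJ hf0 hg0 hfL2 hgL2 hmean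
  set I := Set.Icc a b with hIdef
  set J := Set.Icc c d with hJdef
  set δ := setDist I J with hδdef
  have hδpos : 0 < δ := lt_of_lt_of_le (by linarith) hdistJ
  -- separation
  have hsep : ∀ t ∈ I, ∀ s ∈ J, δ ≤ |t - s| := by
    intro t ht s hs
    have hbdd : BddBelow (Set.image2 dist I J) := by
      refine ⟨0, fun x hx => ?_⟩
      rcases hx with ⟨u, hu, v, hv, rfl⟩
      exact dist_nonneg
    have := csInf_le hbdd (Set.mem_image2_of_mem ht hs)
    simpa [Real.dist_eq, hδdef, setDist] using this
  have haI : a ∈ I := Set.left_mem_Icc.2 hab.le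
  have hne : ∀ t ∈ I, ∀ s ∈ J, t - s ≠ 0 := by
    intro t ht s hs h
    have := hsep t ht s hs
    rw [h, abs_zero] at this
    linarith
  -- finite measure instances
  haveI : IsFiniteMeasure (μ.restrict I) :=
    ⟨by rwa [Measure.restrict_apply_univ]⟩
  haveI : IsFiniteMeasure (ν.restrict J) :=
    ⟨by rwa [Measure.restrict_apply_univ]⟩
  -- integrability
  have hfi : IntegrableOn f I μ := (hfL2.restrict I).integrable one_le_two
  have hgi : IntegrableOn g J ν := (hgL2.restrict J).integrable one_le_two
  -- kernel integrand integrable for each t ∈ I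
  have hkerm : ∀ t : ℝ, AEStronglyMeasurable (fun s => g s * (t - s)⁻¹) (ν.restrict J) := by
    intro t
    exact (hgL2.restrict J).aestronglyMeasurable.mul
      ((measurable_const.sub measurable_id).inv.aestronglyMeasurable)
  have hker_int : ∀ t ∈ I, IntegrableOn (fun s => g s * (t - s)⁻¹) J ν := by
    intro t ht
    refine Integrable.mono' (hgi.norm.const_mul δ⁻¹) (hkerm t) (ae_of_all _ fun s => ?_)
    by_cases hs : s ∈ J
    · have h1 : δ ≤ |t - s| := hsep t ht s hs
      have h2 : |(t - s)⁻¹| ≤ δ⁻¹ := by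
        rw [abs_inv]
        exact inv_anti₀ hδpos h1
      calc ‖g s * (t - s)⁻¹‖ = |g s| * |(t - s)⁻¹| := abs_mul _ _
        _ ≤ |g s| * δ⁻¹ := by
            exact mul_le_mul_of_nonneg_left h2 (abs_nonneg _)
        _ = δ⁻¹ * ‖g s‖ := by rw [mul_comm]; rfl
    · simp [hg0 s hs, inv_nonneg.2 hδpos.le]
  -- define G
  set G : ℝ → ℝ := fun t => ∫ s, g s * (t - s)⁻¹ ∂(ν.restrict J) with hGdef
  -- difference bound
  set Cg : ℝ := ∫ s in J, |g s| ∂ν with hCgdef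
  have hCg_nonneg : 0 ≤ Cg := integral_nonneg fun s => abs_nonneg _
  have hGdiff : ∀ t ∈ I, |G t - G a| ≤ (b - a) / δ ^ 2 * Cg := by
    intro t ht
    have hsub : G t - G a = ∫ s, (g s * (t - s)⁻¹ - g s * (a - s)⁻¹) ∂(ν.restrict J) :=
      (integral_sub (hker_int t ht) (hker_int a haI)).symm
    rw [hsub]
    have hbd : ∀ s : ℝ, ‖g s * (t - s)⁻¹ - g s * (a - s)⁻¹‖ ≤ (b - a) / δ ^ 2 * |g s| := by
      intro s
      by_cases hs : s ∈ J
      · have hts := hne t ht s hs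
        have has := hne a haI s hs
        have hid : g s * (t - s)⁻¹ - g s * (a - s)⁻¹ = g s * ((a - t) / ((t - s) * (a - s))) := by
          field_simp
          ring
        rw [hid]
        have h1 : |a - t| ≤ b - a := by
          rcases ht with ⟨h2, h3⟩
          rw [abs_le]; constructor <;> linarith
        have h2 : δ ^ 2 ≤ |(t - s) * (a - s)| := by
          rw [abs_mul, sq]
          exact mul_le_mul (hsep t ht s hs) (hsep a haI s hs) hδpos.le (abs_nonneg _)
        have h3 : |(a - t) / ((t - s) * (a - s))| ≤ (b - a) / δ ^ 2 := by
          rw [abs_div]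
          exact div_le_div₀ (by linarith) h1 (by positivity) h2
        calc ‖g s * ((a - t) / ((t - s) * (a - s)))‖
            = |g s| * |(a - t) / ((t - s) * (a - s))| := abs_mul _ _
          _ ≤ |g s| * ((b - a) / δ ^ 2) := mul_le_mul_of_nonneg_left h3 (abs_nonneg _)
          _ = (b - a) / δ ^ 2 * |g s| := mul_comm _ _
      · simp [hg0 s hs]
    calc |∫ s, (g s * (t - s)⁻¹ - g s * (a - s)⁻¹) ∂(ν.restrict J)|
        = ‖∫ s, (g s * (t - s)⁻¹ - g s * (a - s)⁻¹) ∂(ν.restrict J)‖ :=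
          (Real.norm_eq_abs _).symm
      _ ≤ ∫ s, ‖g s * (t - s)⁻¹ - g s * (a - s)⁻¹‖ ∂(ν.restrict J) :=
          norm_integral_le_integral_norm _
      _ ≤ ∫ s, (b - a) / δ ^ 2 * |g s| ∂(ν.restrict J) := by
          refine integral_mono_of_nonneg (ae_of_all _ fun s => norm_nonneg _)
            (hgi.norm.const_mul _) (ae_of_all _ hbd)
      _ = (b - a) / δ ^ 2 * Cg := by rw [integral_const_mul]
  -- measurability of G
  have hGm : AEStronglyMeasurable G (μ.restrict I) := by
    have hjoint : AEStronglyMeasurable (fun p : ℝ × ℝ => g p.2 * (p.1 - p.2)⁻¹)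
        ((μ.restrict I).prod (ν.restrict J)) := by
      exact ((hgL2.restrict J).aestronglyMeasurable.comp_snd).mul
        ((measurable_fst.sub measurable_snd).inv.aestronglyMeasurable)
    exact hjoint.integral_prod_right'
  -- the inner integral equals f t * G t
  have hinner : ∀ t : ℝ, (∫ s in J, f t * g s / (t - s) ∂ν) = f t * G t := by
    intro t
    rw [hGdef]
    simp_rw [mul_div_assoc, div_eq_mul_inv]
    exact integral_const_mul _ _
  set C : ℝ := (b - a) / δ ^ 2 * Cg with hCdef
  have hC_nonneg : 0 ≤ C := by
    apply mul_nonneg _ hCg_nonneg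
    exact div_nonneg (by linarith) (by positivity)
  -- integrability of t ↦ f t * (G t - G a) on I
  have hfGint : IntegrableOn (fun t => f t * (G t - G a)) I μ := by
    refine Integrable.mono' (hfi.norm.const_mul C)
      (((hfL2.restrict I).aestronglyMeasurable).mul (hGm.sub aestronglyMeasurable_const))
      (ae_of_all _ fun t => ?_)
    by_cases ht : t ∈ I
    · calc ‖f t * (G t - G a)‖ = |f t| * |G t - G a| := abs_mul _ _
        _ ≤ |f t| * C := mul_le_mul_of_nonneg_left (hGdiff t ht) (abs_nonneg _)
        _ = C * ‖f t‖ := mul_comm _ _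
    · simp [hf0 t ht, hC_nonneg]
  -- main rewriting
  have hmain : ∫ t in I, (∫ s in J, f t * g s / (t - s) ∂ν) ∂μ
      = ∫ t in I, f t * (G t - G a) ∂μ := by
    calc ∫ t in I, (∫ s in J, f t * g s / (t - s) ∂ν) ∂μ
        = ∫ t in I, (f t * (G t - G a) + G a * f t) ∂μ := by
          refine integral_congr_ae (ae_of_all _ fun t => ?_)
          show (∫ s in J, f t * g s / (t - s) ∂ν) = f t * (G t - G a) + G a * f t
          rw [hinner t]; ring
      _ = (∫ t in I, f t * (G t - G a) ∂μ) + ∫ t in I, G a * f t ∂μ :=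
          integral_add hfGint (hfi.const_mul _)
      _ = ∫ t in I, f t * (G t - G a) ∂μ := by
          rw [integral_const_mul, hmean, mul_zero, add_zero]
  -- bound
  set Cf : ℝ := ∫ t in I, |f t| ∂μ with hCfdef
  have hbound : |∫ t in I, (∫ s in J, f t * g s / (t - s) ∂ν) ∂μ| ≤ C * Cf := by
    rw [hmain]
    calc |∫ t in I, f t * (G t - G a) ∂μ|
        = ‖∫ t in I, f t * (G t - G a) ∂μ‖ := (Real.norm_eq_abs _).symm
      _ ≤ ∫ t in I, ‖f t * (G t - G a)‖ ∂μ := norm_integral_le_integral_norm _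
      _ ≤ ∫ t in I, C * |f t| ∂μ := by
          refine integral_mono_of_nonneg (ae_of_all _ fun t => norm_nonneg _)
            (hfi.norm.const_mul _) (ae_of_all _ fun t => ?_)
          by_cases ht : t ∈ I
          · calc ‖f t * (G t - G a)‖ = |f t| * |G t - G a| := abs_mul _ _
              _ ≤ |f t| * C := mul_le_mul_of_nonneg_left (hGdiff t ht) (abs_nonneg _)
              _ = C * |f t| := mul_comm _ _
          · simp [hf0 t ht, hC_nonneg]
      _ = C * Cf := integral_const_mul _ _
  -- Cauchy–Schwarz
  have hfCS : Cf ≤ Real.sqrt (μ I).toReal * Real.sqrt (∫ t in I, f t ^ 2 ∂μ) := by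
    have := cs_aux (μ.restrict I) f (hfL2.restrict I)
    rwa [Measure.restrict_apply_univ] at this
  have hgCS : Cg ≤ Real.sqrt (ν J).toReal * Real.sqrt (∫ s in J, g s ^ 2 ∂ν) := by
    have := cs_aux (ν.restrict J) g (hgL2.restrict J)
    rwa [Measure.restrict_apply_univ] at this
  -- constant comparison
  set D : ℝ := δ + (b - a) + (d - c) with hDdef
  have hDpos : 0 < D := by
    have := hδpos; rw [hDdef]; linarith
  have hD3 : D ≤ 3 * δ := by
    have h1 : b - a ≤ δ := le_trans hIJ hdistJ
    have h2 : d - c ≤ δ := hdistJ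
    rw [hDdef]; linarith
  have hconst : (b - a) / δ ^ 2 ≤ 9 * ((b - a) / D ^ 2) := by
    rw [div_le_iff₀ (by positivity), mul_comm (9:ℝ), mul_assoc, div_mul_eq_mul_div,
      le_div_iff₀ (by positivity)]
    have hD2 : D ^ 2 ≤ 9 * δ ^ 2 := by nlinarith [hDpos, hD3]
    nlinarith [mul_le_mul_of_nonneg_left hD2 (by linarith : (0:ℝ) ≤ b - a)]
  -- assemble
  have hCfnn : 0 ≤ Cf := integral_nonneg fun t => abs_nonneg _
  have hsqf : 0 ≤ Real.sqrt (μ I).toReal * Real.sqrt (∫ t in I, f t ^ 2 ∂μ) := by positivity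
  have hsqg : 0 ≤ Real.sqrt (ν J).toReal * Real.sqrt (∫ s in J, g s ^ 2 ∂ν) := by positivity
  calc |∫ t in I, (∫ s in J, f t * g s / (t - s) ∂ν) ∂μ|
      ≤ C * Cf := hbound
    _ = (b - a) / δ ^ 2 * Cg * Cf := by rw [hCdef]
    _ ≤ 9 * ((b - a) / D ^ 2) *
        (Real.sqrt (ν J).toReal * Real.sqrt (∫ s in J, g s ^ 2 ∂ν)) *
        (Real.sqrt (μ I).toReal * Real.sqrt (∫ t in I, f t ^ 2 ∂μ)) := by
        have hstep1 : (b - a) / δ ^ 2 * Cg * Cf ≤ 9 * ((b - a) / D ^ 2) * Cg * Cf := by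
          apply mul_le_mul_of_nonneg_right _ hCfnn
          exact mul_le_mul_of_nonneg_right hconst hCg_nonneg
        refine le_trans hstep1 ?_
        have h9 : (0:ℝ) ≤ 9 * ((b - a) / D ^ 2) :=
          mul_nonneg (by norm_num) (div_nonneg (by linarith) (by positivity))
        apply mul_le_mul
        · exact mul_le_mul_of_nonneg_left hgCS h9
        · exact hfCS
        · exact hCfnn
        · exact mul_nonneg h9 hsqg
    _ = 9 * ((b - a) / D ^ 2) * Real.sqrt (μ I).toReal * Real.sqrt (ν J).toReal *
        Real.sqrt (∫ t in I, f t ^ 2 ∂μ) * Real.sqrt (∫ s in J, g s ^ 2 ∂ν) := by ring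
end

section
/- Let μ, ν be positive measures on ℝ with Q_{μ,ν} < ∞. For r > 0 define I_r φ(s) := (1/(2r)) ∫ χ_{[-r,r]}(s-t) φ(t) dμ(t). Then there is an absolute constant A such that ‖I_r φ‖_{L²(ν)} ≤ A·Q_{μ,ν}^{1/2}·‖φ‖_{L²(μ)} for all φ ∈ L²(μ) and all r > 0. -/
open MeasureTheory Set
open ENNReal

theorem lintegral_sq_le_measure_mul {α : Type*} [MeasurableSpace α] (μ : Measure α)
    (f : α → ℝ≥0∞) (hf : AEMeasurable f μ) :
    (∫⁻ a, f a ∂μ) ^ 2 ≤ μ Set.univ * ∫⁻ a, f a ^ 2 ∂μ := by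
  have hpq : Real.HolderConjugate 2 2 := by constructor <;> norm_num
  have h := ENNReal.lintegral_mul_le_Lp_mul_Lq μ hpq hf aemeasurable_const (g := fun _ => 1)
  simp only [Pi.mul_apply, mul_one, ENNReal.one_rpow, lintegral_const, one_mul] at h
  calc (∫⁻ a, f a ∂μ) ^ 2
      ≤ ((∫⁻ a, f a ^ (2:ℝ) ∂μ) ^ (1/(2:ℝ)) * (μ Set.univ) ^ (1/(2:ℝ))) ^ 2 :=
        pow_le_pow_left' h 2
    _ = μ Set.univ * ∫⁻ a, f a ^ 2 ∂μ := by
        rw [mul_pow, ← ENNReal.rpow_natCast (_ ^ (1/(2:ℝ))) 2,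
          ← ENNReal.rpow_natCast ((μ Set.univ) ^ (1/(2:ℝ))) 2, ← ENNReal.rpow_mul,
          ← ENNReal.rpow_mul]
        norm_num
        exact mul_comm _ _

theorem meas_Icc_window (μ : Measure ℝ) [IsLocallyFiniteMeasure μ] (c : ℝ) :
    Measurable fun t : ℝ => μ (Icc (t - c) (t + c)) := by
  have hs : MeasurableSet {p : ℝ × ℝ | p.1 - c ≤ p.2 ∧ p.2 ≤ p.1 + c} :=
    (measurableSet_le (by fun_prop : Measurable fun p : ℝ × ℝ => p.1 - c) (by fun_prop)).inter
      (measurableSet_le (by fun_prop) (by fun_prop : Measurable fun p : ℝ × ℝ => p.1 + c))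
  exact measurable_measure_prodMk_left hs

theorem key_lintegral_bound (μ ν : Measure ℝ) [IsLocallyFiniteMeasure μ]
    [IsLocallyFiniteMeasure ν] (Q : ℝ)
    (hQb : ∀ a b : ℝ, a < b →
      ((μ (Set.Icc a b)).toReal / (b - a)) * ((ν (Set.Icc a b)).toReal / (b - a)) ≤ Q)
    (r : ℝ) (hr : 0 < r) (φ : ℝ → ℝ) (hφm : Measurable φ) :
    ∫⁻ s, ENNReal.ofReal (((1 / (2 * r)) * ∫ t in Set.Icc (s - r) (s + r), φ t ∂μ) ^ 2) ∂ν ≤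
      ENNReal.ofReal (4 * Q) * ∫⁻ t, (‖φ t‖₊ : ℝ≥0∞) ^ 2 ∂μ := by
  set g : ℝ → ℝ≥0∞ := fun t => (‖φ t‖₊ : ℝ≥0∞) ^ 2 with hg
  set K : ℝ → ℝ≥0∞ := fun t => μ (Icc (t - 2*r) (t + 2*r)) with hK
  have hKm : Measurable K := meas_Icc_window μ (2*r)
  have hgm : Measurable g := by fun_prop
  have hc : (0:ℝ) ≤ 1 / (2*r) := by positivity
  -- Step 1: pointwise bound
  have step1 : ∀ s : ℝ,
      ENNReal.ofReal (((1 / (2 * r)) * ∫ t in Icc (s - r) (s + r), φ t ∂μ) ^ 2) ≤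
        ENNReal.ofReal (1/(2*r)) ^ 2 * ∫⁻ t in Icc (s - r) (s + r), K t * g t ∂μ := by
    intro s
    have hIfin : μ (Icc (s - r) (s + r)) ≠ ⊤ := (isCompact_Icc.measure_lt_top).ne
    have e1 : ENNReal.ofReal (((1 / (2 * r)) * ∫ t in Icc (s - r) (s + r), φ t ∂μ) ^ 2)
        = (ENNReal.ofReal (1/(2*r)) * ↑‖∫ t in Icc (s - r) (s + r), φ t ∂μ‖₊) ^ 2 := by
      rw [mul_pow, ← enorm_eq_nnnorm, ← ofReal_norm, ← ENNReal.ofReal_mul hc,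
        ← ENNReal.ofReal_pow (by positivity)]
      congr 1
      rw [mul_pow, Real.norm_eq_abs, sq_abs]
    rw [e1, mul_pow]
    gcongr
    calc (↑‖∫ t in Icc (s - r) (s + r), φ t ∂μ‖₊ : ℝ≥0∞) ^ 2
        ≤ (∫⁻ t in Icc (s - r) (s + r), (‖φ t‖₊ : ℝ≥0∞) ∂μ) ^ 2 := by
          gcongr
          exact enorm_integral_le_lintegral_enorm _
      _ ≤ μ (Icc (s - r) (s + r)) * ∫⁻ t in Icc (s - r) (s + r), g t ∂μ := by
          have := lintegral_sq_le_measure_mul (μ.restrict (Icc (s - r) (s + r)))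
            (fun t => (‖φ t‖₊ : ℝ≥0∞)) (by fun_prop)
          simpa [Measure.restrict_apply_univ] using this
      _ = ∫⁻ t in Icc (s - r) (s + r), μ (Icc (s - r) (s + r)) * g t ∂μ :=
          (lintegral_const_mul' _ _ hIfin).symm
      _ ≤ ∫⁻ t in Icc (s - r) (s + r), K t * g t ∂μ := by
          refine setLIntegral_mono (by fun_prop) fun t ht => ?_
          gcongr
          refine measure_mono fun u hu => ?_
          simp only [mem_Icc] at *
          constructor <;> linarith [ht.1, ht.2, hu.1, hu.2]
  -- Step 2: Fubini
  set S : Set (ℝ × ℝ) := {p : ℝ × ℝ | p.1 - r ≤ p.2 ∧ p.2 ≤ p.1 + r} with hS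
  have hSm : MeasurableSet S :=
    (measurableSet_le (by fun_prop : Measurable fun p : ℝ × ℝ => p.1 - r) (by fun_prop)).inter
      (measurableSet_le (by fun_prop) (by fun_prop : Measurable fun p : ℝ × ℝ => p.1 + r))
  set F : ℝ × ℝ → ℝ≥0∞ := S.indicator (fun p => K p.2 * g p.2) with hF
  have hFm : Measurable F :=
    ((hKm.comp measurable_snd).mul (hgm.comp measurable_snd)).indicator hSm
  have inner_eq : ∀ s, ∫⁻ t in Icc (s - r) (s + r), K t * g t ∂μ = ∫⁻ t, F (s, t) ∂μ := by
    intro s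
    rw [← lintegral_indicator measurableSet_Icc]
    refine lintegral_congr fun t => ?_
    simp only [hF, indicator_apply, hS, mem_setOf_eq, mem_Icc]
  have swap : ∫⁻ s, ∫⁻ t, F (s, t) ∂μ ∂ν = ∫⁻ t, ∫⁻ s, F (s, t) ∂ν ∂μ :=
    lintegral_lintegral_swap hFm.aemeasurable
  have outer_eq : ∀ t, ∫⁻ s, F (s, t) ∂ν = K t * g t * ν (Icc (t - r) (t + r)) := by
    intro t
    have hpt : ∀ s, F (s, t) = (Icc (t - r) (t + r)).indicator (fun _ => K t * g t) s := by
      intro s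
      simp only [hF, indicator_apply, hS, mem_setOf_eq, mem_Icc]
      congr 1
      simp only [eq_iff_iff]
      constructor <;> rintro ⟨h1, h2⟩ <;> constructor <;> linarith
    simp_rw [hpt]
    rw [lintegral_indicator_const measurableSet_Icc, mul_comm]
  have final : ∀ t, K t * g t * ν (Icc (t - r) (t + r)) ≤
      ENNReal.ofReal (16 * Q * r ^ 2) * g t := by
    intro t
    have hsub : ν (Icc (t - r) (t + r)) ≤ ν (Icc (t - 2*r) (t + 2*r)) :=
      measure_mono (Icc_subset_Icc (by linarith) (by linarith))
    have hμfin : μ (Icc (t - 2*r) (t + 2*r)) ≠ ⊤ := (isCompact_Icc.measure_lt_top).ne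
    have hνfin : ν (Icc (t - 2*r) (t + 2*r)) ≠ ⊤ := (isCompact_Icc.measure_lt_top).ne
    have hQt := hQb (t - 2*r) (t + 2*r) (by linarith)
    have hlen : (t + 2*r) - (t - 2*r) = 4*r := by ring
    rw [hlen] at hQt
    have hreal : (μ (Icc (t - 2*r) (t + 2*r))).toReal * (ν (Icc (t - 2*r) (t + 2*r))).toReal
        ≤ 16 * Q * r ^ 2 := by
      have h4r : (0:ℝ) < 4*r := by linarith
      calc (μ (Icc (t - 2*r) (t + 2*r))).toReal * (ν (Icc (t - 2*r) (t + 2*r))).toReal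
          = ((μ (Icc (t - 2*r) (t + 2*r))).toReal / (4*r) *
              ((ν (Icc (t - 2*r) (t + 2*r))).toReal / (4*r))) * (16 * r^2) := by
            rw [div_mul_div_comm, div_mul_eq_mul_div, eq_comm, div_eq_iff (by positivity)]
            ring
        _ ≤ Q * (16 * r^2) := mul_le_mul_of_nonneg_right hQt (by positivity)
        _ = 16 * Q * r ^ 2 := by ring
    have hKN : K t * ν (Icc (t - r) (t + r)) ≤ ENNReal.ofReal (16 * Q * r ^ 2) := by
      calc K t * ν (Icc (t - r) (t + r)) ≤ K t * ν (Icc (t - 2*r) (t + 2*r)) := by gcongr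
        _ = ENNReal.ofReal ((μ (Icc (t - 2*r) (t + 2*r))).toReal *
              (ν (Icc (t - 2*r) (t + 2*r))).toReal) := by
            rw [ENNReal.ofReal_mul ENNReal.toReal_nonneg, ENNReal.ofReal_toReal hμfin,
              ENNReal.ofReal_toReal hνfin]
        _ ≤ ENNReal.ofReal (16 * Q * r ^ 2) := ENNReal.ofReal_le_ofReal hreal
    calc K t * g t * ν (Icc (t - r) (t + r))
        = (K t * ν (Icc (t - r) (t + r))) * g t := by ring
      _ ≤ ENNReal.ofReal (16 * Q * r ^ 2) * g t := by gcongr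
  have hcne : (ENNReal.ofReal (1/(2*r))) ^ 2 ≠ ⊤ := by
    exact ENNReal.pow_ne_top ENNReal.ofReal_ne_top
  calc ∫⁻ s, ENNReal.ofReal (((1 / (2 * r)) * ∫ t in Set.Icc (s - r) (s + r), φ t ∂μ) ^ 2) ∂ν
      ≤ ∫⁻ s, ENNReal.ofReal (1/(2*r)) ^ 2 * ∫⁻ t in Icc (s - r) (s + r), K t * g t ∂μ ∂ν :=
        lintegral_mono step1
    _ = ENNReal.ofReal (1/(2*r)) ^ 2 * ∫⁻ s, ∫⁻ t, F (s, t) ∂μ ∂ν := by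
        rw [lintegral_const_mul' _ _ hcne]
        congr 1
        exact lintegral_congr inner_eq
    _ = ENNReal.ofReal (1/(2*r)) ^ 2 * ∫⁻ t, K t * g t * ν (Icc (t - r) (t + r)) ∂μ := by
        rw [swap]
        congr 1
        exact lintegral_congr outer_eq
    _ ≤ ENNReal.ofReal (1/(2*r)) ^ 2 * ∫⁻ t, ENNReal.ofReal (16 * Q * r ^ 2) * g t ∂μ := by
        exact mul_le_mul_right (lintegral_mono final) _
    _ = ENNReal.ofReal (4 * Q) * ∫⁻ t, g t ∂μ := by
        rw [lintegral_const_mul' _ _ ENNReal.ofReal_ne_top, ← mul_assoc]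
        congr 1
        rw [← ENNReal.ofReal_pow hc, ← ENNReal.ofReal_mul (by positivity)]
        congr 1
        field_simp
        ring

/-- Two-weight bound for the normalized convolution averages
I_r φ(s) = (1/(2r)) ∫_{[s-r,s+r]} φ dμ: there is an absolute constant A such that
whenever Q_{μ,ν} = sup_I (μ(I)/|I|)(ν(I)/|I|) ≤ Q one has
‖I_r φ‖_{L²(ν)} ≤ A Q^{1/2} ‖φ‖_{L²(μ)} for all r > 0. -/
theorem convolution_averaging_two_weight :
    ∃ A : ℝ, 0 < A ∧
    ∀ (μ ν : Measure ℝ), IsLocallyFiniteMeasure μ → IsLocallyFiniteMeasure ν →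
    ∀ (Q : ℝ), 0 ≤ Q →
    (∀ a b : ℝ, a < b →
      ((μ (Set.Icc a b)).toReal / (b - a)) * ((ν (Set.Icc a b)).toReal / (b - a)) ≤ Q) →
    ∀ (r : ℝ), 0 < r →
    ∀ (φ : ℝ → ℝ), MemLp φ 2 μ →
      Real.sqrt (∫ s, ((1 / (2 * r)) * ∫ t in Set.Icc (s - r) (s + r), φ t ∂μ) ^ 2 ∂ν) ≤
        A * Real.sqrt Q * Real.sqrt (∫ t, (φ t) ^ 2 ∂μ) := by
  refine ⟨2, by norm_num, ?_⟩
  intro μ ν hμl hνl Q hQ hQb r hr φ hφ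
  set ψ := hφ.1.mk φ with hψ
  have hψsm : StronglyMeasurable ψ := hφ.1.stronglyMeasurable_mk
  have hae : φ =ᵐ[μ] ψ := hφ.1.ae_eq_mk
  have hψmeas : Measurable ψ := hψsm.measurable
  have hLHSeq : ∀ s : ℝ, (∫ t in Icc (s - r) (s + r), φ t ∂μ)
      = ∫ t in Icc (s - r) (s + r), ψ t ∂μ :=
    fun s => integral_congr_ae (ae_restrict_of_ae hae)
  have hRHSeq : ∫ t, φ t ^ 2 ∂μ = ∫ t, ψ t ^ 2 ∂μ :=
    integral_congr_ae (hae.mono fun t ht => by simp only [ht])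
  simp only [hLHSeq, hRHSeq]
  have hψ2 : MemLp ψ 2 μ := hφ.ae_eq hae
  set X := ∫⁻ t, (‖ψ t‖₊ : ℝ≥0∞) ^ 2 ∂μ with hX
  have hXr : X = ∫⁻ t, (‖ψ t‖₊ : ℝ≥0∞) ^ (2:ℝ) ∂μ :=
    lintegral_congr fun t => by rw [← ENNReal.rpow_natCast]; norm_num
  have hXfin : X ≠ ⊤ := by
    have h1 := hψ2.eLpNorm_lt_top
    rw [eLpNorm_eq_lintegral_rpow_enorm_toReal (by norm_num) (by norm_num)] at h1
    simp only [ENNReal.toReal_ofNat] at h1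
    have h2 : ∫⁻ t, (‖ψ t‖₊ : ℝ≥0∞) ^ (2:ℝ) ∂μ < ⊤ :=
      (ENNReal.rpow_lt_top_iff_of_pos (y := 1/(2:ℝ)) (by norm_num)).mp h1
    rw [hXr]
    exact h2.ne
  have hXeq : ∫ t, ψ t ^ 2 ∂μ = X.toReal := by
    rw [integral_eq_lintegral_of_nonneg_ae (Filter.Eventually.of_forall fun t => sq_nonneg _)
      ((hψmeas.pow_const 2).aestronglyMeasurable)]
    congr 1
    exact lintegral_congr fun t => by
      rw [← sq_abs, ENNReal.ofReal_pow (abs_nonneg _), ← Real.enorm_eq_ofReal_abs, enorm_eq_nnnorm]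
  have key := key_lintegral_bound μ ν Q hQb r hr ψ hψmeas
  have hbound : (∫ s, ((1 / (2 * r)) * ∫ t in Icc (s - r) (s + r), ψ t ∂μ) ^ 2 ∂ν)
      ≤ 4 * Q * X.toReal := by
    by_cases hint : Integrable
        (fun s => ((1 / (2 * r)) * ∫ t in Icc (s - r) (s + r), ψ t ∂μ) ^ 2) ν
    · rw [integral_eq_lintegral_of_nonneg_ae (Filter.Eventually.of_forall fun s => sq_nonneg _)
        hint.1]
      have hfin : ENNReal.ofReal (4 * Q) * X ≠ ⊤ := ENNReal.mul_ne_top ENNReal.ofReal_ne_top hXfin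
      calc (∫⁻ s, ENNReal.ofReal (((1 / (2 * r)) *
                ∫ t in Icc (s - r) (s + r), ψ t ∂μ) ^ 2) ∂ν).toReal
          ≤ (ENNReal.ofReal (4 * Q) * X).toReal := ENNReal.toReal_mono hfin key
        _ = 4 * Q * X.toReal := by
            rw [ENNReal.toReal_mul, ENNReal.toReal_ofReal (by positivity)]
    · rw [integral_undef hint]
      positivity
  calc Real.sqrt (∫ s, ((1 / (2 * r)) * ∫ t in Icc (s - r) (s + r), ψ t ∂μ) ^ 2 ∂ν)
      ≤ Real.sqrt (4 * Q * X.toReal) := Real.sqrt_le_sqrt hbound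
    _ = 2 * Real.sqrt Q * Real.sqrt (∫ t, ψ t ^ 2 ∂μ) := by
        rw [hXeq, show (4:ℝ) * Q = 2 ^ 2 * Q by ring, Real.sqrt_mul (by positivity),
          Real.sqrt_mul (by positivity), Real.sqrt_sq (by norm_num)]
end

section
/- Let μ, ν be positive measures on ℝ, I an interval, and suppose the maximal operator bound ∫_I (M_μ χ_I)² dν ≤ C_M·μ(I) holds, where M_μ φ(x) := sup_{intervals ℓ ∋ x} (1/|ℓ|)∫_ℓ |φ| dμ. Then for any finite family of pairwise disjoint subintervals {I_α} of I, Σ_α [P_{I_α}(χ_I dμ)]²·ν(I_α) ≤ A·C_M·μ(I), where P_{[a,b]}(dσ) := (1/π)∫_ℝ (b-a)/((b-a)² + ((a+b)/2 - t)²) dσ(t) and A is an absolute constant. -/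
open MeasureTheory Set ENNReal

/-- Poisson average of the measure μ restricted to E, adapted to the interval [a,b]
(evaluated at the center of [a,b] at height b-a). -/
noncomputable def poissonAvg (μ : Measure ℝ) (a b : ℝ) (E : Set ℝ) : ℝ≥0∞ :=
  ENNReal.ofReal (1 / Real.pi) *
    ∫⁻ t in E, ENNReal.ofReal ((b - a) / ((b - a) ^ 2 + ((a + b) / 2 - t) ^ 2)) ∂μ

/-- Two-weight maximal function of χ_E with respect to μ:
M_μ(χ_E)(x) = sup over intervals ℓ ∋ x of μ(ℓ ∩ E)/|ℓ|. -/
noncomputable def maxOp (μ : Measure ℝ) (E : Set ℝ) (x : ℝ) : ℝ≥0∞ :=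
  ⨆ (a : ℝ) (b : ℝ) (_ : a ≤ x ∧ x ≤ b ∧ a < b),
    μ (Set.Icc a b ∩ E) / ENNReal.ofReal (b - a)


lemma kernel_le_tsum (L m t : ℝ) (hL : 0 < L) :
    ENNReal.ofReal (L / (L ^ 2 + (m - t) ^ 2)) ≤
    ∑' k : ℕ, (Set.Icc (m - 2 ^ k * L) (m + 2 ^ k * L)).indicator
      (fun _ => ENNReal.ofReal (4 / (4 ^ k * L))) t := by
  classical
  have hex : ∃ k : ℕ, |m - t| ≤ 2 ^ k * L := by
    obtain ⟨n, hn⟩ := pow_unbounded_of_one_lt (|m - t| / L) (by norm_num : (1:ℝ) < 2)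
    exact ⟨n, by rw [div_lt_iff₀ hL] at hn; exact hn.le⟩
  set k := Nat.find hex with hk
  have hkle : |m - t| ≤ 2 ^ k * L := Nat.find_spec hex
  have hmem : t ∈ Set.Icc (m - 2 ^ k * L) (m + 2 ^ k * L) := by
    rw [Set.mem_Icc]
    have := abs_le.mp hkle
    constructor <;> linarith [this.1, this.2]
  have hKreal : L / (L ^ 2 + (m - t) ^ 2) ≤ 4 / (4 ^ k * L) := by
    rw [div_le_div_iff₀ (by positivity) (by positivity)]
    rcases Nat.eq_zero_or_pos k with h0 | hpos
    · rw [h0]; nlinarith [sq_nonneg (m - t)]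
    · obtain ⟨j, hj⟩ := Nat.exists_eq_succ_of_ne_zero hpos.ne'
      have hnot : ¬ |m - t| ≤ 2 ^ j * L :=
        Nat.find_min hex (by omega)
      rw [hj]
      push_neg at hnot
      have h1 : (2 ^ j * L) ^ 2 ≤ (m - t) ^ 2 := by
        have := pow_le_pow_left₀ (by positivity : (0:ℝ) ≤ 2 ^ j * L) hnot.le 2
        rwa [sq_abs] at this
      have h2 : ((2:ℝ) ^ j) ^ 2 = 4 ^ j := by
        rw [← pow_mul, mul_comm, pow_mul]; norm_num
      have h3 : (4:ℝ) ^ (j.succ) = 4 * 4 ^ j := by rw [pow_succ]; ring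
      nlinarith [sq_nonneg (m - t), pow_pos (by norm_num : (0:ℝ) < 4) j]
  calc ENNReal.ofReal (L / (L ^ 2 + (m - t) ^ 2))
      ≤ ENNReal.ofReal (4 / (4 ^ k * L)) := ENNReal.ofReal_le_ofReal hKreal
    _ = (Set.Icc (m - 2 ^ k * L) (m + 2 ^ k * L)).indicator
        (fun _ => ENNReal.ofReal (4 / (4 ^ k * L))) t := by
        rw [Set.indicator_of_mem hmem]
    _ ≤ _ := ENNReal.le_tsum k

lemma poisson_le_max (μ : Measure ℝ) (E : Set ℝ) (c d x : ℝ) (hcd : c < d)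
    (hx : x ∈ Set.Icc c d) :
    poissonAvg μ c d E ≤ 16 * maxOp μ E x := by
  set L := d - c with hLdef
  set m := (c + d) / 2 with hmdef
  have hL : 0 < L := by simp [hLdef]; linarith
  -- maximal function bound for each annulus
  have hmax : ∀ k : ℕ, μ (Set.Icc (m - 2 ^ k * L) (m + 2 ^ k * L) ∩ E) ≤
      maxOp μ E x * ENNReal.ofReal (2 * 2 ^ k * L) := by
    intro k
    have h2k : (1:ℝ) ≤ 2 ^ k := by exact one_le_pow₀ (by norm_num)
    have hcond : (m - 2 ^ k * L) ≤ x ∧ x ≤ (m + 2 ^ k * L) ∧ (m - 2 ^ k * L) < (m + 2 ^ k * L) := by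
      obtain ⟨hx1, hx2⟩ := hx
      refine ⟨?_, ?_, ?_⟩ <;> [nlinarith; nlinarith; nlinarith]
    have hsup : μ (Set.Icc (m - 2 ^ k * L) (m + 2 ^ k * L) ∩ E) /
        ENNReal.ofReal ((m + 2 ^ k * L) - (m - 2 ^ k * L)) ≤ maxOp μ E x :=
      le_iSup_of_le (m - 2 ^ k * L) (le_iSup_of_le (m + 2 ^ k * L)
        (le_iSup_of_le hcond le_rfl))
    have hlen : (m + 2 ^ k * L) - (m - 2 ^ k * L) = 2 * 2 ^ k * L := by ring
    rw [hlen] at hsup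
    have hne : ENNReal.ofReal (2 * 2 ^ k * L) ≠ 0 := by
      simp [ENNReal.ofReal_eq_zero, not_le]; positivity
    rw [ENNReal.div_le_iff hne ENNReal.ofReal_ne_top] at hsup
    exact hsup
  have key : (∫⁻ t in E, ENNReal.ofReal ((d - c) / ((d - c) ^ 2 + ((c + d) / 2 - t) ^ 2)) ∂μ)
      ≤ 16 * maxOp μ E x := by
    calc (∫⁻ t in E, ENNReal.ofReal ((d - c) / ((d - c) ^ 2 + ((c + d) / 2 - t) ^ 2)) ∂μ)
        ≤ ∫⁻ t in E, ∑' k : ℕ, (Set.Icc (m - 2 ^ k * L) (m + 2 ^ k * L)).indicator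
            (fun _ => ENNReal.ofReal (4 / (4 ^ k * L))) t ∂μ := by
          apply lintegral_mono
          intro t
          exact kernel_le_tsum L m t hL
      _ = ∑' k : ℕ, ∫⁻ t in E, (Set.Icc (m - 2 ^ k * L) (m + 2 ^ k * L)).indicator
            (fun _ => ENNReal.ofReal (4 / (4 ^ k * L))) t ∂μ :=
          lintegral_tsum fun k => (measurable_const.indicator measurableSet_Icc).aemeasurable
      _ = ∑' k : ℕ, ENNReal.ofReal (4 / (4 ^ k * L)) *
            μ (Set.Icc (m - 2 ^ k * L) (m + 2 ^ k * L) ∩ E) := by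
          congr 1; funext k
          rw [lintegral_indicator measurableSet_Icc, setLIntegral_const,
            Measure.restrict_apply measurableSet_Icc]
      _ ≤ ∑' k : ℕ, ENNReal.ofReal (4 / (4 ^ k * L)) *
            (maxOp μ E x * ENNReal.ofReal (2 * 2 ^ k * L)) := by
          exact ENNReal.tsum_le_tsum fun k => by gcongr; exact hmax k
      _ = ∑' k : ℕ, ENNReal.ofReal (8 * (1/2 : ℝ) ^ k) * maxOp μ E x := by
          congr 1; funext k
          rw [← mul_assoc, mul_comm (ENNReal.ofReal (4 / (4 ^ k * L))) (maxOp μ E x),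
            mul_assoc, ← ENNReal.ofReal_mul (by positivity), mul_comm]
          congr 2
          have h4 : (4:ℝ) ^ k = 2 ^ k * 2 ^ k := by
            rw [← mul_pow]; norm_num
          field_simp
          rw [h4]; ring_nf; rw [one_div_pow, pow_mul]; field_simp
      _ = (∑' k : ℕ, ENNReal.ofReal (8 * (1/2 : ℝ) ^ k)) * maxOp μ E x := by
          rw [ENNReal.tsum_mul_right]
      _ = 16 * maxOp μ E x := by
          congr 1
          have : ∀ k : ℕ, ENNReal.ofReal (8 * (1/2 : ℝ) ^ k) =
              ENNReal.ofReal 8 * (ENNReal.ofReal (1/2)) ^ k := by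
            intro k
            rw [ENNReal.ofReal_mul (by norm_num), ENNReal.ofReal_pow (by norm_num)]
          simp_rw [this]
          rw [ENNReal.tsum_mul_left, ENNReal.tsum_geometric]
          have h12 : ENNReal.ofReal (1/2 : ℝ) = 2⁻¹ := by
            rw [ENNReal.ofReal_div_of_pos (by norm_num)]
            norm_num
          rw [h12, ENNReal.one_sub_inv_two, inv_inv]
          rw [show ENNReal.ofReal 8 = 8 by norm_num]
          norm_num
  calc poissonAvg μ c d E
      = ENNReal.ofReal (1 / Real.pi) *
        ∫⁻ t in E, ENNReal.ofReal ((d - c) / ((d - c) ^ 2 + ((c + d) / 2 - t) ^ 2)) ∂μ := rfl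
    _ ≤ 1 * (16 * maxOp μ E x) := by
        apply mul_le_mul' _ key
        rw [ENNReal.ofReal_le_one]
        rw [div_le_one Real.pi_pos]
        linarith [Real.pi_gt_three]
    _ = 16 * maxOp μ E x := one_mul _

/-- If the two-weight maximal operator testing bound ∫_I (M_μ χ_I)² dν ≤ C_M μ(I) holds,
then for every finite family of pairwise disjoint subintervals {I_α} of I one has
Σ_α [P_{I_α}(χ_I dμ)]² ν(I_α) ≤ A·C_M·μ(I) for an absolute constant A. -/
theorem maximal_implies_pivotal :
    ∃ A : ℝ≥0∞, 0 < A ∧ A < ⊤ ∧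
    ∀ (μ ν : Measure ℝ) (a b : ℝ) (CM : ℝ≥0∞) (F : Finset (ℝ × ℝ)),
      a < b →
      (∫⁻ x in Set.Icc a b, (maxOp μ (Set.Icc a b) x) ^ 2 ∂ν) ≤ CM * μ (Set.Icc a b) →
      (∀ p ∈ F, a ≤ p.1 ∧ p.1 < p.2 ∧ p.2 ≤ b) →
      ((F : Set (ℝ × ℝ)).PairwiseDisjoint fun p => Set.Icc p.1 p.2) →
      (∑ p ∈ F, (poissonAvg μ p.1 p.2 (Set.Icc a b)) ^ 2 * ν (Set.Icc p.1 p.2)) ≤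
        A * CM * μ (Set.Icc a b) := by
  refine ⟨256, by norm_num, by norm_num, ?_⟩
  intro μ ν a b CM F hab hmax hsub hdisj
  set E := Set.Icc a b with hE
  have stepA : ∀ p ∈ F, (poissonAvg μ p.1 p.2 E) ^ 2 * ν (Set.Icc p.1 p.2) ≤
      256 * ∫⁻ x in Set.Icc p.1 p.2, (maxOp μ E x) ^ 2 ∂ν := by
    intro p hp
    obtain ⟨hap, hpp, hpb⟩ := hsub p hp
    have h1 : (poissonAvg μ p.1 p.2 E) ^ 2 * ν (Set.Icc p.1 p.2) =
        ∫⁻ _ in Set.Icc p.1 p.2, (poissonAvg μ p.1 p.2 E) ^ 2 ∂ν := by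
      rw [setLIntegral_const]
    rw [h1, ← lintegral_const_mul' _ _ (by norm_num : (256 : ℝ≥0∞) ≠ ⊤)]
    apply lintegral_mono_ae
    apply ae_restrict_of_forall_mem measurableSet_Icc
    intro x hxmem
    have hple := poisson_le_max μ E p.1 p.2 x hpp hxmem
    calc (poissonAvg μ p.1 p.2 E) ^ 2 ≤ (16 * maxOp μ E x) ^ 2 :=
          pow_le_pow_left' hple 2
      _ = 256 * (maxOp μ E x) ^ 2 := by rw [mul_pow]; norm_num
  have stepB : (∑ p ∈ F, ∫⁻ x in Set.Icc p.1 p.2, (maxOp μ E x) ^ 2 ∂ν) ≤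
      ∫⁻ x in E, (maxOp μ E x) ^ 2 ∂ν := by
    rw [← lintegral_biUnion_finset hdisj (fun p _ => measurableSet_Icc)]
    apply lintegral_mono_set
    intro y hy
    simp only [Set.mem_iUnion] at hy
    obtain ⟨p, hpF, hyp⟩ := hy
    obtain ⟨hap, hpp, hpb⟩ := hsub p hpF
    exact ⟨le_trans hap hyp.1, le_trans hyp.2 hpb⟩
  calc (∑ p ∈ F, (poissonAvg μ p.1 p.2 E) ^ 2 * ν (Set.Icc p.1 p.2))
      ≤ ∑ p ∈ F, 256 * ∫⁻ x in Set.Icc p.1 p.2, (maxOp μ E x) ^ 2 ∂ν :=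
        Finset.sum_le_sum stepA
    _ = 256 * ∑ p ∈ F, ∫⁻ x in Set.Icc p.1 p.2, (maxOp μ E x) ^ 2 ∂ν := by
        rw [Finset.mul_sum]
    _ ≤ 256 * ∫⁻ x in E, (maxOp μ E x) ^ 2 ∂ν := by gcongr
    _ ≤ 256 * (CM * μ E) := by gcongr
    _ = 256 * CM * μ E := by rw [mul_assoc]
end

section
/- Stopping-term single estimate: Let μ, ν be positive measures, let Î ⊇ I be intervals, let I_i be a half of I, c the center of I_i, and let J ⊂ I_i be an interval with |J| ≤ |I| and dist(J, e(I)) ≥ |I|^{3/4}|J|^{1/4} (e(I) = endpoints and midpoint of I). Let g_J ∈ L²(ν) be supported on J with ∫ g_J dν = 0. Then |∫_{Î∖I_i} ∫_J g_J(s)/(t-s) dν(s) dμ(t)| ≤ A·ν(J)^{1/2}·‖g_J‖_{L²(ν)}·(|J|/|I|)^{1/2}·P_{I_i}(χ_{Î∖I_i} dμ), where P_{I_i}(dσ) := (1/π)∫ |I_i|/(|I_i|² + (c - t)²) dσ(t) and A is an absolute constant. -/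
open MeasureTheory Set

lemma key_alg (I L h X r : ℝ) (hI : 0 < I) (hL : 0 < L) (hLI : L ≤ I) (hh : h = I / 2)
    (hX1 : I ^ ((3:ℝ)/4) * L ^ ((1:ℝ)/4) ≤ X) (hX2 : |r| - h / 2 ≤ X) :
    L / X ^ 2 ≤ 8 * Real.sqrt (L / I) * (h / (h ^ 2 + r ^ 2)) := by
  have hD : 0 < I ^ ((3:ℝ)/4) * L ^ ((1:ℝ)/4) :=
    mul_pos (Real.rpow_pos_of_pos hI _) (Real.rpow_pos_of_pos hL _)
  have hX : 0 < X := lt_of_lt_of_le hD hX1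
  have hsL : Real.sqrt L ^ 2 = L := Real.sq_sqrt hL.le
  have hsI : Real.sqrt I ^ 2 = I := Real.sq_sqrt hI.le
  have hsLI : Real.sqrt L ≤ Real.sqrt I := Real.sqrt_le_sqrt hLI
  have hsLpos : 0 < Real.sqrt L := Real.sqrt_pos.mpr hL
  have hsIpos : 0 < Real.sqrt I := Real.sqrt_pos.mpr hI
  -- D^2 = I * sqrt I * sqrt L
  have hD2 : (I ^ ((3:ℝ)/4) * L ^ ((1:ℝ)/4)) ^ 2 = I * Real.sqrt I * Real.sqrt L := by
    rw [mul_pow, ← Real.rpow_natCast (I ^ ((3:ℝ)/4)) 2, ← Real.rpow_natCast (L ^ ((1:ℝ)/4)) 2,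
      ← Real.rpow_mul hI.le, ← Real.rpow_mul hL.le]
    norm_num
    rw [Real.sqrt_eq_rpow, Real.sqrt_eq_rpow, show (3:ℝ)/2 = 1 + 1/2 by norm_num,
      Real.rpow_add hI, Real.rpow_one]
  have hX2' : I * Real.sqrt I * Real.sqrt L ≤ X ^ 2 := by
    rw [← hD2]; exact pow_le_pow_left₀ hD.le hX1 2
  have hr : r ^ 2 ≤ 2 * X ^ 2 + h ^ 2 / 2 := by
    have h1 : |r| ≤ X + h / 2 := by linarith
    have h2 : r ^ 2 = |r| ^ 2 := (sq_abs r).symm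
    nlinarith [abs_nonneg r, sq_nonneg (X - h/2)]
  have hhpos : 0 < h := by rw [hh]; positivity
  have hden : 0 < h ^ 2 + r ^ 2 := by positivity
  have hsqrtdiv : Real.sqrt (L / I) = Real.sqrt L / Real.sqrt I := Real.sqrt_div' L hI.le ▸ by
    rw [Real.sqrt_div hL.le]
  rw [div_le_iff₀ (by positivity), hsqrtdiv]
  have main : L * (h ^ 2 + r ^ 2) ≤ 8 * (Real.sqrt L / Real.sqrt I) * h * X ^ 2 := by
    have e1 : 8 * (Real.sqrt L / Real.sqrt I) * h * X ^ 2
        = 4 * Real.sqrt L * Real.sqrt I * X ^ 2 := by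
      rw [hh]; field_simp
      linear_combination (-8) * hsI
    rw [e1]
    have t1 : 2 * (L * X ^ 2) ≤ 2 * (Real.sqrt L * Real.sqrt I * X ^ 2) := by
      have : L ≤ Real.sqrt L * Real.sqrt I := by nlinarith
      nlinarith [sq_nonneg X]
    have t2 : L * ((3:ℝ)/2 * h ^ 2) ≤ 2 * (Real.sqrt L * Real.sqrt I * X ^ 2) := by
      have h3 : Real.sqrt L * Real.sqrt I * (I * Real.sqrt I * Real.sqrt L) = L * I ^ 2 := by
        linear_combination (Real.sqrt I ^ 2 * I) * hsL + (L * I) * hsI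
      have hsq : h ^ 2 = I ^ 2 / 4 := by rw [hh]; ring
      have h4 : L * I ^ 2 ≤ Real.sqrt L * Real.sqrt I * X ^ 2 := by
        calc L * I ^ 2 = Real.sqrt L * Real.sqrt I * (I * Real.sqrt I * Real.sqrt L) := h3.symm
          _ ≤ _ := mul_le_mul_of_nonneg_left hX2' (by positivity)
      nlinarith [mul_nonneg hL.le (sq_nonneg I), hsq, h4]
    have h5 := mul_le_mul_of_nonneg_left hr hL.le
    linarith
  have e2 : 8 * (Real.sqrt L / Real.sqrt I) * (h / (h ^ 2 + r ^ 2)) * X ^ 2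
      = (8 * (Real.sqrt L / Real.sqrt I) * h * X ^ 2) / (h ^ 2 + r ^ 2) := by ring
  rw [e2, le_div_iff₀ hden]
  exact main

lemma cs_lemma (ν : Measure ℝ) (c d : ℝ) (g : ℝ → ℝ) (hν : ν (Set.Icc c d) < ⊤)
    (hg : MemLp g 2 ν) :
    ∫ s in Set.Icc c d, |g s| ∂ν ≤
      Real.sqrt (ν (Set.Icc c d)).toReal * Real.sqrt (∫ s in Set.Icc c d, g s ^ 2 ∂ν) := by
  haveI : IsFiniteMeasure (ν.restrict (Set.Icc c d)) :=
    ⟨by rwa [Measure.restrict_apply_univ]⟩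
  have hpq : Real.HolderConjugate 2 2 := by
    rw [Real.holderConjugate_iff_eq_conjExponent] <;> norm_num
  have hf : MemLp (fun s => |g s|) (ENNReal.ofReal 2) (ν.restrict (Set.Icc c d)) := by
    have := (hg.restrict (Set.Icc c d)).abs
    rw [show ENNReal.ofReal 2 = 2 by norm_num]; exact this
  have hone : MemLp (fun _ : ℝ => (1:ℝ)) (ENNReal.ofReal 2) (ν.restrict (Set.Icc c d)) :=
    memLp_const 1
  have h := integral_mul_le_Lp_mul_Lq_of_nonneg hpq
    (Filter.Eventually.of_forall fun s => abs_nonneg (g s))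
    (Filter.Eventually.of_forall fun _ => zero_le_one) hf hone
  simp only [mul_one] at h
  calc ∫ s in Set.Icc c d, |g s| ∂ν
      ≤ (∫ s in Set.Icc c d, |g s| ^ (2:ℝ) ∂ν) ^ ((1:ℝ)/2) *
        (∫ _ in Set.Icc c d, (1:ℝ) ^ (2:ℝ) ∂ν) ^ ((1:ℝ)/2) := h
    _ = Real.sqrt (ν (Set.Icc c d)).toReal * Real.sqrt (∫ s in Set.Icc c d, g s ^ 2 ∂ν) := by
        have e1 : ∀ s, |g s| ^ (2:ℝ) = g s ^ 2 := fun s => by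
          rw [show (2:ℝ) = ((2:ℕ):ℝ) by norm_num, Real.rpow_natCast, sq_abs]
        simp only [e1, Real.one_rpow, integral_const, smul_eq_mul, mul_one,
          Measure.restrict_apply_univ, measureReal_restrict_apply_univ, measureReal_def]
        rw [Real.sqrt_eq_rpow, Real.sqrt_eq_rpow, mul_comm]

/-- Stopping-term single estimate: Î ⊇ I intervals, I_i = [ai,bi] a half of I = [aI,bI],
J = [c,d] ⊂ I_i with |J| ≤ |I| and dist(J, e(I)) ≥ |I|^{3/4}|J|^{1/4} (e(I) = endpoints
and midpoint of I), and g supported on J with ν-mean zero. Then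
|∫_{Î∖I_i} ∫_J g(s)/(t-s) dν(s) dμ(t)| ≤
A · ν(J)^{1/2} ‖g‖_{L²(ν)} (|J|/|I|)^{1/2} · P_{I_i}(χ_{Î∖I_i} dμ), where P_{I_i} is the
Poisson average adapted to I_i. -/
theorem stopping_term_estimate :
    ∃ A : ℝ, 0 < A ∧
    ∀ (μ ν : Measure ℝ) (Al Bl aI bI ai bi c d : ℝ) (g : ℝ → ℝ),
      Al < Bl → aI < bI → c < d →
      Set.Icc aI bI ⊆ Set.Icc Al Bl →
      ((ai = aI ∧ bi = (aI + bI) / 2) ∨ (ai = (aI + bI) / 2 ∧ bi = bI)) →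
      Set.Icc c d ⊆ Set.Icc ai bi →
      d - c ≤ bI - aI →
      (∀ p ∈ ({aI, (aI + bI) / 2, bI} : Set ℝ),
        (bI - aI) ^ ((3:ℝ)/4) * (d - c) ^ ((1:ℝ)/4) ≤ Metric.infDist p (Set.Icc c d)) →
      μ (Set.Icc Al Bl) < ⊤ → ν (Set.Icc c d) < ⊤ →
      (∀ s ∉ Set.Icc c d, g s = 0) → MemLp g 2 ν →
      (∫ s in Set.Icc c d, g s ∂ν) = 0 →
      |∫ t in Set.Icc Al Bl \ Set.Icc ai bi, (∫ s in Set.Icc c d, g s / (t - s) ∂ν) ∂μ| ≤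
        A * Real.sqrt (ν (Set.Icc c d)).toReal *
          Real.sqrt (∫ s in Set.Icc c d, (g s) ^ 2 ∂ν) *
          Real.sqrt ((d - c) / (bI - aI)) *
          ((1 / Real.pi) * ∫ t in Set.Icc Al Bl \ Set.Icc ai bi,
            (bi - ai) / ((bi - ai) ^ 2 + ((ai + bi) / 2 - t) ^ 2) ∂μ) := by
  refine ⟨8 * Real.pi, by positivity, ?_⟩
  intro μ ν Al Bl aI bI ai bi c d g hAB haIbI hcd hII hhalf hJI hlen hsep hμ hν hsupp hg2 hmean
  set J : Set ℝ := Set.Icc c d with hJ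
  set E : Set ℝ := Set.Icc Al Bl \ Set.Icc ai bi with hE
  set L : ℝ := d - c with hLdef
  set I : ℝ := bI - aI with hIdef
  set h : ℝ := bi - ai with hhdef
  set ci : ℝ := (ai + bi) / 2 with hcidef
  set D : ℝ := I ^ ((3:ℝ)/4) * L ^ ((1:ℝ)/4) with hDdef
  have hLpos : 0 < L := by simp [hLdef]; linarith
  have hIpos : 0 < I := by simp [hIdef]; linarith
  have hhI : h = I / 2 := by
    rcases hhalf with ⟨h1, h2⟩ | ⟨h1, h2⟩ <;> simp [hhdef, hIdef, h1, h2] <;> ring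
  have hhpos : 0 < h := by rw [hhI]; positivity
  have hai : ai ∈ ({aI, (aI + bI) / 2, bI} : Set ℝ) := by
    rcases hhalf with ⟨h1, _⟩ | ⟨h1, _⟩ <;> simp [h1]
  have hbi : bi ∈ ({aI, (aI + bI) / 2, bI} : Set ℝ) := by
    rcases hhalf with ⟨_, h2⟩ | ⟨_, h2⟩ <;> simp [h2]
  have hcJ : c ∈ J := ⟨le_refl c, hcd.le⟩
  have hdJ : d ∈ J := ⟨hcd.le, le_refl d⟩
  have hcab : c ∈ Set.Icc ai bi := hJI hcJ
  have hdab : d ∈ Set.Icc ai bi := hJI hdJ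
  have hDa : D ≤ c - ai := by
    have h1 := hsep ai hai
    have h2 : Metric.infDist ai J ≤ dist ai c := Metric.infDist_le_dist_of_mem hcJ
    rw [Real.dist_eq, abs_of_nonpos (by linarith [hcab.1])] at h2
    simp only [hDdef, hIdef, hLdef]
    linarith
  have hDb : D ≤ bi - d := by
    have h1 := hsep bi hbi
    have h2 : Metric.infDist bi J ≤ dist bi d := Metric.infDist_le_dist_of_mem hdJ
    rw [Real.dist_eq, abs_of_nonneg (by linarith [hdab.2])] at h2
    simp only [hDdef, hIdef, hLdef]
    linarith
  have hDpos : 0 < D :=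
    mul_pos (Real.rpow_pos_of_pos hIpos _) (Real.rpow_pos_of_pos hLpos _)
  haveI : IsFiniteMeasure (ν.restrict J) := ⟨by rwa [Measure.restrict_apply_univ]⟩
  -- the constant in the pointwise bound
  set CS : ℝ := Real.sqrt (ν J).toReal * Real.sqrt (∫ s in J, g s ^ 2 ∂ν) with hCS
  have hCSnn : 0 ≤ CS := by positivity
  have hLInn : 0 ≤ Real.sqrt (L / I) := Real.sqrt_nonneg _
  -- pointwise bound
  have hpt : ∀ t, t ∉ Set.Icc ai bi →
      |∫ s in J, g s / (t - s) ∂ν| ≤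
        8 * Real.sqrt (L / I) * CS * (h / (h ^ 2 + (ci - t) ^ 2)) := by
    intro t ht
    set X : ℝ := max D (|ci - t| - h / 2) with hXdef
    have hXpos : 0 < X := lt_of_lt_of_le hDpos (le_max_left _ _)
    rw [Set.mem_Icc, not_and_or, not_le, not_le] at ht
    have hts : ∀ s ∈ J, X ≤ |t - s| := by
      intro s hs
      have hsab : s ∈ Set.Icc ai bi := hJI hs
      refine max_le ?_ ?_
      · rcases ht with ht | ht
        · rw [abs_sub_comm, abs_of_nonneg (by linarith [hs.1, hsab.1])]
          linarith [hs.1]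
        · rw [abs_of_nonneg (by linarith [hs.2, hsab.2])]
          linarith [hs.2]
      · have h1 : |ci - s| ≤ h / 2 := by
          rw [abs_le]
          constructor <;> simp only [hcidef, hhdef] <;> [linarith [hsab.2]; linarith [hsab.1]]
        have h2 : |ci - t| ≤ |ci - s| + |s - t| := abs_sub_le ci s t
        rw [abs_sub_comm s t] at h2
        linarith
    have htc : X ≤ |t - c| := hts c hcJ
    have htsne : ∀ s ∈ J, t - s ≠ 0 := fun s hs => by
      intro h0
      have := hts s hs
      rw [h0, abs_zero] at this
      linarith
    have htcne : t - c ≠ 0 := htsne c hcJ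
    have hgint : Integrable g (ν.restrict J) :=
      (hg2.restrict J).integrable (by norm_num)
    have hinvmeas : AEStronglyMeasurable (fun s => (t - s)⁻¹) (ν.restrict J) :=
      ((measurable_const.sub measurable_id).inv).aestronglyMeasurable
    have hinvbdd : ∀ᵐ s ∂ν.restrict J, ‖(t - s)⁻¹‖ ≤ X⁻¹ := by
      rw [ae_restrict_iff' measurableSet_Icc]
      filter_upwards with s hs
      rw [Real.norm_eq_abs, abs_inv]
      exact inv_anti₀ hXpos (hts s hs)
    have i1 : Integrable (fun s => (t - s)⁻¹ * g s) (ν.restrict J) :=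
      hgint.bdd_mul hinvmeas hinvbdd
    have i1' : Integrable (fun s => g s * (t - s)⁻¹) (ν.restrict J) := by
      simpa [mul_comm] using i1
    have i2 : Integrable (fun s => g s * (t - c)⁻¹) (ν.restrict J) :=
      hgint.mul_const _
    have hzero : (∫ s in J, g s * (t - c)⁻¹ ∂ν) = 0 := by
      rw [integral_mul_const, hmean, zero_mul]
    have heq : (∫ s in J, g s / (t - s) ∂ν)
        = ∫ s in J, g s * (t - s)⁻¹ - g s * (t - c)⁻¹ ∂ν := by
      rw [integral_sub i1' i2, hzero, sub_zero]
      simp [div_eq_mul_inv]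
    have hbound : ∀ s ∈ J, |g s * (t - s)⁻¹ - g s * (t - c)⁻¹| ≤ |g s| * (L / X ^ 2) := by
      intro s hs
      have hne : t - s ≠ 0 := htsne s hs
      have hw : (t - s)⁻¹ - (t - c)⁻¹ = (s - c) / ((t - s) * (t - c)) := by
        field_simp
        ring
      have e3 : g s * (t - s)⁻¹ - g s * (t - c)⁻¹ = g s * ((t - s)⁻¹ - (t - c)⁻¹) := by ring
      rw [e3, abs_mul, hw, abs_div, abs_mul]
      refine mul_le_mul_of_nonneg_left ?_ (abs_nonneg _)
      have hnum : |s - c| ≤ L := by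
        rw [abs_of_nonneg (by linarith [hs.1])]
        simp only [hLdef]; linarith [hs.2]
      have hXX : X ^ 2 ≤ |t - s| * |t - c| := by
        rw [sq]
        exact mul_le_mul (hts s hs) htc hXpos.le (abs_nonneg _)
      exact div_le_div₀ hLpos.le hnum (by positivity) hXX
    have hint_abs : Integrable (fun s => |g s| * (L / X ^ 2)) (ν.restrict J) :=
      hgint.abs.mul_const _
    have step1 : |∫ s in J, g s / (t - s) ∂ν| ≤ ∫ s in J, |g s| * (L / X ^ 2) ∂ν := by
      rw [heq]
      calc |∫ s in J, g s * (t - s)⁻¹ - g s * (t - c)⁻¹ ∂ν|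
          ≤ ∫ s in J, |g s * (t - s)⁻¹ - g s * (t - c)⁻¹| ∂ν := by
            simpa [Real.norm_eq_abs] using
              norm_integral_le_integral_norm (μ := ν.restrict J)
                (fun s => g s * (t - s)⁻¹ - g s * (t - c)⁻¹)
        _ ≤ ∫ s in J, |g s| * (L / X ^ 2) ∂ν := by
            refine integral_mono_of_nonneg
              (Filter.Eventually.of_forall fun s => abs_nonneg _) hint_abs ?_
            exact (ae_restrict_iff' measurableSet_Icc).mpr
              (Filter.Eventually.of_forall hbound)
    have step2 : (∫ s in J, |g s| * (L / X ^ 2) ∂ν) ≤ CS * (L / X ^ 2) := by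
      rw [integral_mul_const]
      exact mul_le_mul_of_nonneg_right (cs_lemma ν c d g hν hg2) (by positivity)
    have step3 : L / X ^ 2 ≤ 8 * Real.sqrt (L / I) * (h / (h ^ 2 + (ci - t) ^ 2)) :=
      key_alg I L h X (ci - t) hIpos hLpos hlen hhI (le_max_left _ _) (le_max_right _ _)
    calc |∫ s in J, g s / (t - s) ∂ν| ≤ CS * (L / X ^ 2) := le_trans step1 step2
      _ ≤ CS * (8 * Real.sqrt (L / I) * (h / (h ^ 2 + (ci - t) ^ 2))) :=
          mul_le_mul_of_nonneg_left step3 hCSnn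
      _ = 8 * Real.sqrt (L / I) * CS * (h / (h ^ 2 + (ci - t) ^ 2)) := by ring
  -- outer integration
  have hEmeas : MeasurableSet E := measurableSet_Icc.diff measurableSet_Icc
  haveI : IsFiniteMeasure (μ.restrict E) := by
    refine ⟨?_⟩
    rw [Measure.restrict_apply_univ]
    exact lt_of_le_of_lt (measure_mono Set.diff_subset) hμ
  have hKcont : Continuous (fun t : ℝ => h / (h ^ 2 + (ci - t) ^ 2)) := by
    refine continuous_const.div
      (continuous_const.add (((continuous_const.sub continuous_id).pow 2))) ?_
    intro t
    positivity
  have hKint : Integrable (fun t : ℝ => h / (h ^ 2 + (ci - t) ^ 2)) (μ.restrict E) := by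
    refine Integrable.mono' (integrable_const (1 / h)) hKcont.aestronglyMeasurable ?_
    filter_upwards with t
    rw [Real.norm_eq_abs, abs_of_nonneg (by positivity)]
    calc h / (h ^ 2 + (ci - t) ^ 2) ≤ h / h ^ 2 :=
          div_le_div_of_nonneg_left hhpos.le (by positivity) (by nlinarith [sq_nonneg (ci - t)])
      _ = 1 / h := by rw [sq]; field_simp
  have houter : |∫ t in E, (∫ s in J, g s / (t - s) ∂ν) ∂μ| ≤
      8 * Real.sqrt (L / I) * CS * ∫ t in E, h / (h ^ 2 + (ci - t) ^ 2) ∂μ := by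
    calc |∫ t in E, (∫ s in J, g s / (t - s) ∂ν) ∂μ|
        ≤ ∫ t in E, |∫ s in J, g s / (t - s) ∂ν| ∂μ := by
          simpa [Real.norm_eq_abs] using
            norm_integral_le_integral_norm (μ := μ.restrict E)
              (fun t => ∫ s in J, g s / (t - s) ∂ν)
      _ ≤ ∫ t in E, 8 * Real.sqrt (L / I) * CS * (h / (h ^ 2 + (ci - t) ^ 2)) ∂μ := by
          refine integral_mono_of_nonneg
            (Filter.Eventually.of_forall fun t => abs_nonneg _) (hKint.const_mul _) ?_
          exact (ae_restrict_iff' hEmeas).mpr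
            (Filter.Eventually.of_forall fun t htE => hpt t htE.2)
      _ = 8 * Real.sqrt (L / I) * CS * ∫ t in E, h / (h ^ 2 + (ci - t) ^ 2) ∂μ :=
          integral_const_mul _ _
  refine le_trans houter (le_of_eq ?_)
  have hpi : Real.pi ≠ 0 := Real.pi_ne_zero
  rw [hCS]
  field_simp
end
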